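/- (i) The coordinatewise conditional expectation satisfies μ[M ·ᵥ ẏ | 𝒢] = ℳ ·ᵥ g μ-almost everywhere, where ℳ is the m×m random matrix with entries ℳ_{st} := μ[M_{st} | 𝒢]. (ii) If moreover ℳ(ω) is invertible for μ-almost every ω, then g = ℳ⁻¹ ·ᵥ μ[M ·ᵥ ẏ | 𝒢] μ-almost everywhere. (Closed-form identification of the endogeneity-correction function g.) -/

import Mathlib

open MeasureTheory Matrix

/-- Closed-form identification of the endogeneity-correction function `g`:
(i) `μ[M ·ᵥ ẏ | 𝒢] = ℳ ·ᵥ g` a.e., where `ℳ` is the entrywise conditional expectation of `M`;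
(ii) if `ℳ(ω)` is a.e. invertible then `g = ℳ⁻¹ ·ᵥ μ[M ·ᵥ ẏ | 𝒢]` a.e. -/
theorem identification_of_g
    {Ω : Type*} {mΩ : MeasurableSpace Ω} (μ : Measure Ω) [IsProbabilityMeasure μ]
    (𝒢 ℋ : MeasurableSpace Ω) (h𝒢ℋ : 𝒢 ≤ ℋ) (hℋ : ℋ ≤ mΩ)
    (m : ℕ) (hm : 0 < m)
    (M : Ω → Matrix (Fin m) (Fin m) ℝ)
    (hMmeas : ∀ s t, StronglyMeasurable[ℋ] fun ω => M ω s t)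
    (hMbdd : ∀ ω s t, |M ω s t| ≤ 1)
    (g : Ω → Fin m → ℝ) (hgmeas : ∀ s, StronglyMeasurable[𝒢] fun ω => g ω s)
    (hgint : Integrable g μ)
    (u : Ω → Fin m → ℝ) (huint : Integrable u μ)
    (hu : ∀ s, μ[(fun ω => u ω s) | ℋ] =ᵐ[μ] 0)
    (h : Ω → Fin m → ℝ) (hMh : ∀ᵐ ω ∂μ, M ω *ᵥ h ω = 0)
    (ydot : Ω → Fin m → ℝ) (hy : ∀ ω, ydot ω = h ω + g ω + u ω)
    (ℳ : Ω → Matrix (Fin m) (Fin m) ℝ)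
    (hℳ : ∀ s t, (fun ω => ℳ ω s t) = μ[(fun ω => M ω s t) | 𝒢]) :
    (∀ s, μ[(fun ω => (M ω *ᵥ ydot ω) s) | 𝒢] =ᵐ[μ] fun ω => (ℳ ω *ᵥ g ω) s)
      ∧ ((∀ᵐ ω ∂μ, IsUnit (ℳ ω)) →
          ∀ᵐ ω ∂μ,
            g ω = (ℳ ω)⁻¹ *ᵥ fun s => (μ[(fun ω' => (M ω' *ᵥ ydot ω') s) | 𝒢]) ω) := by
  -- coordinatewise integrability
  have hgint' : ∀ t, Integrable (fun ω => g ω t) μ := fun t =>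
    (ContinuousLinearMap.proj (R := ℝ) (φ := fun _ : Fin m => ℝ) t).integrable_comp hgint
  have huint' : ∀ t, Integrable (fun ω => u ω t) μ := fun t =>
    (ContinuousLinearMap.proj (R := ℝ) (φ := fun _ : Fin m => ℝ) t).integrable_comp huint
  have hMaes : ∀ s t, AEStronglyMeasurable[mΩ] (fun ω => M ω s t) μ := fun s t =>
    ((hMmeas s t).mono hℋ).aestronglyMeasurable
  have hMnorm : ∀ s t, ∀ ω, ‖M ω s t‖ ≤ (1 : ℝ) := fun s t ω => by
    simpa using hMbdd ω s t
  have hMint : ∀ s t, Integrable (fun ω => M ω s t) μ := fun s t =>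
    (integrable_const (1 : ℝ)).mono' (hMaes s t) (ae_of_all _ (hMnorm s t))
  have hMg : ∀ s t, Integrable (fun ω => M ω s t * g ω t) μ := fun s t =>
    (hgint' t).bdd_mul (hMaes s t) (ae_of_all _ (hMnorm s t))
  have hMu : ∀ s t, Integrable (fun ω => M ω s t * u ω t) μ := fun s t =>
    (huint' t).bdd_mul (hMaes s t) (ae_of_all _ (hMnorm s t))
  -- conditional expectation of M_{st} u_t vanishes given 𝒢
  have hMu0 : ∀ s t, μ[(fun ω => M ω s t * u ω t) | 𝒢] =ᵐ[μ] 0 := by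
    intro s t
    have h1 : μ[(fun ω => M ω s t * u ω t) | ℋ] =ᵐ[μ] 0 := by
      have h2 := condExp_mul_of_stronglyMeasurable_left (μ := μ) (hMmeas s t)
        (hMu s t) (huint' t)
      refine h2.trans ?_
      filter_upwards [hu t] with ω hω
      simp only [Pi.mul_apply, Pi.zero_apply] at hω ⊢
      rw [hω, mul_zero]
    calc μ[(fun ω => M ω s t * u ω t) | 𝒢]
        =ᵐ[μ] μ[μ[(fun ω => M ω s t * u ω t) | ℋ] | 𝒢] :=
          (condExp_condExp_of_le h𝒢ℋ hℋ).symm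
      _ =ᵐ[μ] μ[(0 : Ω → ℝ) | 𝒢] := condExp_congr_ae h1
      _ =ᵐ[μ] 0 := by rw [condExp_zero]
  -- pull-out property for the 𝒢-measurable factor g_t
  have hMgce : ∀ s t, μ[(fun ω => M ω s t * g ω t) | 𝒢]
      =ᵐ[μ] fun ω => ℳ ω s t * g ω t := by
    intro s t
    have hcomm : (fun ω => M ω s t * g ω t)
        = (fun ω => g ω t) * (fun ω => M ω s t) := by
      funext ω; simp [mul_comm]
    rw [hcomm]
    have h2 := condExp_mul_of_stronglyMeasurable_left (μ := μ) (hgmeas t)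
      (by rw [← hcomm]; exact hMg s t) (hMint s t)
    refine h2.trans ?_
    refine ae_of_all _ fun ω => ?_
    simp only [Pi.mul_apply]
    rw [← hℳ s t, mul_comm]
  -- part (i)
  have part1 : ∀ s, μ[(fun ω => (M ω *ᵥ ydot ω) s) | 𝒢]
      =ᵐ[μ] fun ω => (ℳ ω *ᵥ g ω) s := by
    intro s
    set F : Fin m → Ω → ℝ :=
      fun t ω => M ω s t * g ω t + M ω s t * u ω t with hF
    have hFint : ∀ t ∈ Finset.univ, Integrable (F t) μ := fun t _ =>
      (hMg s t).add (hMu s t)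
    have hrw : (fun ω => (M ω *ᵥ ydot ω) s) =ᵐ[μ] ∑ t, F t := by
      filter_upwards [hMh] with ω hω
      have h2 : M ω *ᵥ ydot ω = M ω *ᵥ g ω + M ω *ᵥ u ω := by
        rw [hy ω, Matrix.mulVec_add, Matrix.mulVec_add, hω, zero_add]
      have h3 : (M ω *ᵥ ydot ω) s = (M ω *ᵥ g ω) s + (M ω *ᵥ u ω) s := by
        rw [h2]; rfl
      simp only [Finset.sum_apply, hF, Finset.sum_add_distrib]
      simpa [Matrix.mulVec, dotProduct] using h3
    have hFce : ∀ᵐ ω ∂μ, ∀ t, (μ[F t | 𝒢]) ω = ℳ ω s t * g ω t := by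
      rw [ae_all_iff]
      intro t
      have hadd : μ[F t | 𝒢] =ᵐ[μ]
          μ[(fun ω => M ω s t * g ω t) | 𝒢] + μ[(fun ω => M ω s t * u ω t) | 𝒢] :=
        condExp_add (hMg s t) (hMu s t) 𝒢
      filter_upwards [hadd, hMgce s t, hMu0 s t] with ω h1 h2 h3
      simp only [Pi.add_apply] at h1
      rw [h1, h2, h3]; simp
    calc μ[(fun ω => (M ω *ᵥ ydot ω) s) | 𝒢]
        =ᵐ[μ] μ[∑ t, F t | 𝒢] := condExp_congr_ae hrw
      _ =ᵐ[μ] ∑ t, μ[F t | 𝒢] := condExp_finset_sum hFint 𝒢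
      _ =ᵐ[μ] fun ω => (ℳ ω *ᵥ g ω) s := by
          filter_upwards [hFce] with ω hω
          simp only [Finset.sum_apply, Matrix.mulVec, dotProduct]
          exact Finset.sum_congr rfl fun t _ => hω t
  refine ⟨part1, fun hinv => ?_⟩
  have h1 : ∀ᵐ ω ∂μ, ∀ s,
      (μ[(fun ω' => (M ω' *ᵥ ydot ω') s) | 𝒢]) ω = (ℳ ω *ᵥ g ω) s :=
    ae_all_iff.mpr fun s => part1 s
  filter_upwards [h1, hinv] with ω hω hU
  have hvec : (fun s => (μ[(fun ω' => (M ω' *ᵥ ydot ω') s) | 𝒢]) ω)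
      = ℳ ω *ᵥ g ω := funext hω
  rw [hvec, Matrix.mulVec_mulVec,
    Matrix.nonsing_inv_mul _ ((Matrix.isUnit_iff_isUnit_det _).mp hU),
    Matrix.one_mulVec]
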